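/- For any W in (0, 1/2) and any real X with 0 < |X| ≤ 2πW, we have |(X - sin X)/(X sin X)| ≤ (πW/3) · (2πW / sin(2πW)). -/

import Mathlib

open Real

lemma aux1 {x : ℝ} (hx : 0 ≤ x) : x - x ^ 3 / 6 ≤ Real.sin x := by
  have h : MonotoneOn (fun x : ℝ => Real.sin x - x + x ^ 3 / 6) (Set.Ici 0) := by
    apply monotoneOn_of_deriv_nonneg (convex_Ici 0)
    · fun_prop
    · fun_prop
    · intro y hy
      have hd : HasDerivAt (fun x : ℝ => Real.sin x - x + x ^ 3 / 6)
          (Real.cos y - 1 + 3 * y ^ 2 / 6) y := by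
        have := ((Real.hasDerivAt_sin y).sub (hasDerivAt_id y)).add
          (((hasDerivAt_pow 3 y)).div_const 6)
        exact this.congr_deriv (by norm_num)
      rw [hd.deriv]
      have := Real.one_sub_sq_div_two_le_cos (x := y)
      linarith
  have := h (Set.self_mem_Ici) (Set.mem_Ici.2 hx) hx
  simp at this
  linarith

lemma aux2 {a b : ℝ} (ha : 0 ≤ a) (hab : a ≤ b) (hb : 0 < b) (hbpi : b ≤ π) :
    a * Real.sin b ≤ b * Real.sin a := by
  have hc := strictConcaveOn_sin_Icc.concaveOn
  have h0 : (0 : ℝ) ∈ Set.Icc 0 π := by constructor <;> [rfl; exact le_of_lt pi_pos]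
  have hbm : b ∈ Set.Icc 0 π := ⟨hb.le, hbpi⟩
  have hμ : (0:ℝ) ≤ 1 - a / b := by
    have : a / b ≤ 1 := (div_le_one hb).2 hab
    linarith
  have hν : (0:ℝ) ≤ a / b := div_nonneg ha hb.le
  have := hc.2 h0 hbm hμ hν (by ring)
  simp only [smul_eq_mul, mul_zero, Real.sin_zero, zero_add] at this
  have h2 : a / b * b = a := by field_simp
  rw [h2] at this
  have := mul_le_mul_of_nonneg_left this hb.le
  calc a * Real.sin b = b * (a / b * Real.sin b) := by field_simp
    _ ≤ b * Real.sin a := this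
lemma key {t Y : ℝ} (hY : 0 < Y) (hYt : Y ≤ t) (htπ : t < π) :
    (Y - Real.sin Y) / (Y * Real.sin Y) ≤ t ^ 2 / (6 * Real.sin t) := by
  have ht0 : 0 < t := hY.trans_le hYt
  have hsY : 0 < Real.sin Y := Real.sin_pos_of_pos_of_lt_pi hY (lt_of_le_of_lt hYt htπ)
  have hst : 0 < Real.sin t := Real.sin_pos_of_pos_of_lt_pi ht0 htπ
  have h1 : Y - Real.sin Y ≤ Y ^ 3 / 6 := by have := aux1 hY.le; linarith
  have h2 : Y * Real.sin t ≤ t * Real.sin Y := aux2 hY.le hYt ht0 htπ.le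
  rw [div_le_div_iff₀ (by positivity) (by positivity)]
  nlinarith [mul_le_mul_of_nonneg_right h1 hst.le,
    mul_le_mul_of_nonneg_left h2 (mul_nonneg hY.le hY.le),
    mul_le_mul_of_nonneg_left hYt (mul_nonneg (mul_nonneg hY.le ht0.le) hsY.le)]

theorem stmt_4 (W X : ℝ) (hW : W ∈ Set.Ioo 0 (1/2 : ℝ))
    (hX : X ≠ 0) (hX2 : |X| ≤ 2 * π * W) :
    |(X - Real.sin X) / (X * Real.sin X)| ≤ (π * W / 3) * (2 * π * W / Real.sin (2 * π * W)) := by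
  obtain ⟨hW0, hW1⟩ := hW
  have hπ := Real.pi_pos
  have htπ : 2 * π * W < π := by nlinarith
  have hY : 0 < |X| := abs_pos.2 hX
  have hk := key hY hX2 htπ
  have habs : |(X - Real.sin X) / (X * Real.sin X)|
      = (|X| - Real.sin |X|) / (|X| * Real.sin |X|) := by
    rcases lt_or_gt_of_ne hX with h | h
    · have hx : |X| = -X := abs_of_neg h
      rw [hx, Real.sin_neg]
      have : (-X - -Real.sin X) / (-X * -Real.sin X) = -((X - Real.sin X) / (X * Real.sin X)) := by
        ring
      rw [this, ← abs_neg ((X - Real.sin X) / (X * Real.sin X))]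
      apply abs_of_nonneg
      have hXπ : -X < π := lt_of_le_of_lt (hx ▸ hX2) htπ
      have hs : 0 < Real.sin (-X) := Real.sin_pos_of_pos_of_lt_pi (by linarith) hXπ
      rw [Real.sin_neg] at hs
      have hnum : 0 ≤ -X - -Real.sin X := by
        have := Real.le_sin h.le; linarith
      have : -((X - Real.sin X) / (X * Real.sin X))
          = (-X - -Real.sin X) / (-X * -Real.sin X) := by ring
      rw [this]
      exact div_nonneg hnum (by nlinarith)
    · have hx : |X| = X := abs_of_pos h
      rw [hx]
      apply abs_of_nonneg
      have hXπ : X < π := lt_of_le_of_lt (hx ▸ hX2) htπ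
      have hs : 0 < Real.sin X := Real.sin_pos_of_pos_of_lt_pi h hXπ
      have hnum : 0 ≤ X - Real.sin X := by have := Real.sin_le h.le; linarith
      exact div_nonneg hnum (by positivity)
  rw [habs]
  calc (|X| - Real.sin |X|) / (|X| * Real.sin |X|)
      ≤ (2 * π * W) ^ 2 / (6 * Real.sin (2 * π * W)) := hk
    _ = (π * W / 3) * (2 * π * W / Real.sin (2 * π * W)) := by ring
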